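/- Let P be an n×n symmetric real matrix of rank d whose entries satisfy c1·ρ ≤ P_{ij} ≤ c2·ρ for all i,j, for constants c1 > 0, 0 < c2 ≤ 1 and some ρ ∈ (0,1], and whose condition number satisfies σ1(P)/σd(P) ≤ c0. Let U_P be an n×d matrix whose columns are orthonormal eigenvectors of P corresponding to its d nonzero eigenvalues, and let D_P be the d×d diagonal matrix of those eigenvalues (in the matching column order). Then ‖U_P·|D_P|^{1/2}‖_{2→∞} ≤ (c0·c2^{3/2}/c1)·ρ^{1/2}, where |D_P|^{1/2} is the diagonal matrix of square roots of the absolute values of the eigenvalues. -/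

import Mathlib

open Matrix

noncomputable section

/-- The two-to-infinity norm of a real matrix: the maximum Euclidean row norm. -/
def twoInfNorm {α β : Type*} [Fintype α] [Fintype β] (M : Matrix α β ℝ) : ℝ :=
  ⨆ i, Real.sqrt (∑ j, (M i j) ^ 2)

/-- `sval M i` is the `(i+1)`-th largest singular value of the square real matrix `M`
(so `sval M 0 = σ₁(M)`), and `0` if `i` is out of range.  It is defined as the square root of
the `(i+1)`-th largest eigenvalue of `Mᵀ M`. -/
def sval {k : ℕ} (M : Matrix (Fin k) (Fin k) ℝ) (i : ℕ) : ℝ :=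
  if h : i < k then
    Real.sqrt
      (((show (Mᵀ * M).IsHermitian by
          simpa using Matrix.isHermitian_conjTranspose_mul_self M).eigenvalues ∘
        Tuple.sort fun j => -(show (Mᵀ * M).IsHermitian by
          simpa using Matrix.isHermitian_conjTranspose_mul_self M).eigenvalues j) ⟨i, h⟩)
  else 0

lemma isHermitian_transpose_mul_self_aux {k : ℕ} (M : Matrix (Fin k) (Fin k) ℝ) :
    (Mᵀ * M).IsHermitian := by
  simpa using Matrix.isHermitian_conjTranspose_mul_self M

lemma rayleigh_aux {n : ℕ} {A : Matrix (Fin n) (Fin n) ℝ} (hA : A.IsHermitian)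
    (c : ℝ) (hc : ∀ j, hA.eigenvalues j ≤ c) (x : Fin n → ℝ) :
    x ⬝ᵥ (A *ᵥ x) ≤ c * (x ⬝ᵥ x) := by
  set V : Matrix (Fin n) (Fin n) ℝ := (hA.eigenvectorUnitary : Matrix (Fin n) (Fin n) ℝ) with hV
  have hVmem := hA.eigenvectorUnitary.2
  have hVV : V * star V = 1 := (Matrix.mem_unitaryGroup_iff).mp hVmem
  set y : Fin n → ℝ := (star V) *ᵥ x with hy
  have hxw : ∀ w : Fin n → ℝ, x ⬝ᵥ (V *ᵥ w) = y ⬝ᵥ w := by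
    intro w
    rw [dotProduct_mulVec]
    congr 1
    ext j
    simp [hy, Matrix.vecMul, Matrix.mulVec, dotProduct, Matrix.conjTranspose_apply,
      mul_comm]
  have hAx : A *ᵥ x = V *ᵥ ((Matrix.diagonal (RCLike.ofReal ∘ hA.eigenvalues)) *ᵥ y) := by
    conv_lhs => rw [hA.spectral_theorem, Unitary.conjStarAlgAut_apply]
    rw [← Matrix.mulVec_mulVec, ← Matrix.mulVec_mulVec]
  have hyy : y ⬝ᵥ y = x ⬝ᵥ x := by
    have := hxw y
    rw [Matrix.mulVec_mulVec, hVV, Matrix.one_mulVec] at this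
    exact this.symm
  rw [hAx, hxw, ← hyy]
  have hdiag : ∀ j, ((Matrix.diagonal (RCLike.ofReal ∘ hA.eigenvalues)) *ᵥ y) j
      = hA.eigenvalues j * y j := by
    intro j
    simp [Matrix.mulVec_diagonal, RCLike.ofReal_real_eq_id]
  rw [dotProduct, dotProduct, Finset.mul_sum]
  apply Finset.sum_le_sum
  intro j _
  rw [hdiag]
  have h2 : 0 ≤ y j * y j := mul_self_nonneg _
  nlinarith [hc j]

lemma eig_mem_aux {n : ℕ} {A : Matrix (Fin n) (Fin n) ℝ} (hA : A.IsHermitian)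
    (μ : ℝ) (x : Fin n → ℝ) (hx : x ≠ 0) (hAx : A *ᵥ x = μ • x) :
    ∃ j, hA.eigenvalues j = μ := by
  set V : Matrix (Fin n) (Fin n) ℝ := (hA.eigenvectorUnitary : Matrix (Fin n) (Fin n) ℝ) with hV
  have hVmem := hA.eigenvectorUnitary.2
  have hVV : V * star V = 1 := (Matrix.mem_unitaryGroup_iff).mp hVmem
  have hVV' : star V * V = 1 := (Matrix.mem_unitaryGroup_iff').mp hVmem
  set D : Matrix (Fin n) (Fin n) ℝ := Matrix.diagonal (RCLike.ofReal ∘ hA.eigenvalues) with hD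
  have hspec : star V * A = D * star V := by
    have h1 : star V * A * V = D := by
      conv_lhs => rw [hA.spectral_theorem, Unitary.conjStarAlgAut_apply]
      rw [show star V * (V * D * star V) * V = (star V * V) * D * (star V * V) by noncomm_ring,
        hVV', one_mul, mul_one]
    calc star V * A = star V * A * (V * star V) := by rw [hVV, mul_one]
    _ = (star V * A * V) * star V := by noncomm_ring
    _ = D * star V := by rw [h1]
  set y : Fin n → ℝ := (star V) *ᵥ x with hy
  have hyne : y ≠ 0 := by
    intro h
    apply hx
    have : V *ᵥ y = x := by
      rw [hy, Matrix.mulVec_mulVec, hVV, Matrix.one_mulVec]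
    rw [h, Matrix.mulVec_zero] at this
    exact this.symm
  have hDy : D *ᵥ y = μ • y := by
    rw [hy, Matrix.mulVec_mulVec, ← hspec, ← Matrix.mulVec_mulVec, hAx, Matrix.mulVec_smul]
  obtain ⟨j, hj⟩ := Function.ne_iff.mp hyne
  refine ⟨j, ?_⟩
  have := congrFun hDy j
  simp only [hD, Matrix.mulVec_diagonal, Pi.smul_apply, smul_eq_mul, Function.comp_apply,
    RCLike.ofReal_real_eq_id, id_eq] at this
  have hj' : y j ≠ 0 := by simpa using hj
  field_simp at this
  linarith [this]

lemma card_filter_val_lt (n m : ℕ) (h : m ≤ n) :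
    (Finset.univ.filter (fun k : Fin n => (k : ℕ) < m)).card = m := by
  rw [← Fintype.card_subtype]
  exact Fintype.card_congr
    ⟨fun k => ⟨(k : Fin n), k.2⟩, fun k => ⟨⟨(k : ℕ), lt_of_lt_of_le k.2 h⟩, k.2⟩,
     fun k => by ext; rfl, fun k => by ext; rfl⟩ |>.trans (Fintype.card_fin m)

lemma sorted_support {n d : ℕ} (f : Fin n → ℝ) (hf : Antitone f) (hnn : ∀ j, 0 ≤ f j)
    (hcard : (Finset.univ.filter (fun j => f j ≠ 0)).card = d) :
    ∀ j : Fin n, (f j ≠ 0 ↔ (j : ℕ) < d) := by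
  set s := Finset.univ.filter (fun j : Fin n => f j ≠ 0) with hs
  have hdn : d ≤ n := by
    rw [← hcard]
    simpa using Finset.card_le_card (Finset.filter_subset (fun j : Fin n => f j ≠ 0) Finset.univ)
  have hlt : ∀ j : Fin n, (j : ℕ) < d → f j ≠ 0 := by
    intro j hj hfj
    have hsub : s ⊆ Finset.univ.filter (fun k : Fin n => (k : ℕ) < (j : ℕ)) := by
      intro k hk
      simp only [hs, Finset.mem_filter, Finset.mem_univ, true_and] at hk ⊢
      by_contra hkj
      push_neg at hkj
      have : j ≤ k := by exact_mod_cast hkj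
      exact hk (le_antisymm (hfj ▸ hf this) (hnn k))
    have := Finset.card_le_card hsub
    rw [hcard, card_filter_val_lt n (j : ℕ) j.2.le] at this
    omega
  have hsubset : Finset.univ.filter (fun k : Fin n => (k : ℕ) < d) ⊆ s := by
    intro k hk
    simp only [Finset.mem_filter, Finset.mem_univ, true_and] at hk
    simp only [hs, Finset.mem_filter, Finset.mem_univ, true_and]
    exact hlt k hk
  have heq : Finset.univ.filter (fun k : Fin n => (k : ℕ) < d) = s := by
    apply Finset.eq_of_subset_of_card_le hsubset
    rw [hcard, card_filter_val_lt n d hdn]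
  intro j
  constructor
  · intro hfj
    have : j ∈ s := by simp [hs, hfj]
    rw [← heq] at this
    simpa using this
  · exact hlt j

set_option maxHeartbeats 1600000 in
/-- If `P` is an `n × n` symmetric matrix of rank `d` with entries in
`[c1·ρ, c2·ρ]` and condition number `σ₁(P)/σ_d(P) ≤ c0`, `U` is an `n × d` matrix whose
columns are orthonormal eigenvectors of `P` with nonzero eigenvalues `lam i`, and `D_P` is the
diagonal matrix of those eigenvalues, then
`‖U·|D_P|^{1/2}‖_{2→∞} ≤ (c0·c2^{3/2}/c1)·ρ^{1/2}`. -/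
theorem stmt_1 (n d : ℕ) (P : Matrix (Fin n) (Fin n) ℝ) (hPsymm : P.IsSymm)
    (hrank : P.rank = d)
    (ρ c1 c2 c0 : ℝ) (hc1 : 0 < c1) (hc2pos : 0 < c2) (hc2 : c2 ≤ 1)
    (hρpos : 0 < ρ) (hρ : ρ ≤ 1)
    (hent : ∀ i j, c1 * ρ ≤ P i j ∧ P i j ≤ c2 * ρ)
    (hcond : sval P 0 / sval P (d - 1) ≤ c0)
    (U : Matrix (Fin n) (Fin d) ℝ) (lam : Fin d → ℝ)
    (hUorth : Uᵀ * U = 1)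
    (hlam : ∀ i, lam i ≠ 0)
    (hUeig : ∀ i : Fin d,
      P.mulVec (fun r => U r i) = lam i • (fun r => U r i)) :
    twoInfNorm (U * Matrix.diagonal fun i => Real.sqrt |lam i|) ≤
      (c0 * (c2 * Real.sqrt c2) / c1) * Real.sqrt ρ := by
  classical
  rcases Nat.eq_zero_or_pos n with hn0 | hn
  · -- degenerate case n = 0
    have hempty : IsEmpty (Fin n) := by rw [hn0]; exact Fin.isEmpty'
    have hc0 : 0 ≤ c0 := by
      refine le_trans ?_ hcond
      have h0 : sval P 0 = 0 := by
        rw [sval, dif_neg (by omega)]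
      rw [h0]
      simp
    rw [twoInfNorm, Real.iSup_of_isEmpty]
    exact mul_nonneg (div_nonneg (mul_nonneg hc0
      (mul_nonneg hc2pos.le (Real.sqrt_nonneg _))) hc1.le) (Real.sqrt_nonneg _)
  -- main case
  have hN : (0:ℝ) < (n:ℝ) := by exact_mod_cast hn
  set A : Matrix (Fin n) (Fin n) ℝ := Pᴴ * P with hAdef
  have hA : A.IsHermitian := isHermitian_transpose_mul_self_aux P
  set e : Fin n → ℝ := (isHermitian_transpose_mul_self_aux P).eigenvalues with he
  set σ : Equiv.Perm (Fin n) :=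
    Tuple.sort (fun j => -((isHermitian_transpose_mul_self_aux P).eigenvalues j)) with hσ
  set f : Fin n → ℝ := fun j => e (σ j) with hf
  have hPT : Pᵀ = P := hPsymm.eq
  -- nonnegativity of eigenvalues
  have hPH : Pᴴ = P := by
    rw [Matrix.conjTranspose_eq_transpose_of_trivial]; exact hPT
  have hAps : A.PosSemidef := Matrix.posSemidef_conjTranspose_mul_self P
  have hennz : ∀ j, 0 ≤ e j := fun j => hAps.eigenvalues_nonneg j
  -- antitone sorted eigenvalues
  have hanti : Antitone f := by
    intro i j hij
    have h := Tuple.monotone_sort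
      (fun j => -((isHermitian_transpose_mul_self_aux P).eigenvalues j)) hij
    simp only [Function.comp_apply] at h
    exact neg_le_neg_iff.mp h
  -- number of nonzero sorted eigenvalues is d
  have hcard : (Finset.univ.filter (fun j : Fin n => f j ≠ 0)).card = d := by
    have h1 : A.rank = d := by rw [hAdef, Matrix.rank_conjTranspose_mul_self, hrank]
    have h2 := (isHermitian_transpose_mul_self_aux P).rank_eq_card_non_zero_eigs
    have h3 : Fintype.card {i // f i ≠ 0} = Fintype.card {i // e i ≠ 0} :=
      Fintype.card_congr (σ.subtypeEquiv (fun a => Iff.rfl))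
    rw [← Fintype.card_subtype, h3, ← h2]; exact h1
  have hsupp := sorted_support f hanti (fun j => hennz (σ j)) hcard
  -- Rayleigh quotient with the all-ones vector
  have htopb : ∀ j, e j ≤ f ⟨0, hn⟩ := by
    intro j
    have : e j = f (σ.symm j) := by simp [hf]
    rw [this]
    exact hanti (Fin.mk_le_mk.mpr (Nat.zero_le _) |>.trans_eq rfl)
  have hray : (n:ℝ) * ((n:ℝ) * c1 * ρ)^2 ≤ f ⟨0, hn⟩ * (n:ℝ) := by
    have hx := rayleigh_aux (isHermitian_transpose_mul_self_aux P) (f ⟨0, hn⟩) htopb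
      (fun _ => (1:ℝ))
    have hxx : (fun _ : Fin n => (1:ℝ)) ⬝ᵥ (fun _ : Fin n => (1:ℝ)) = (n:ℝ) := by
      simp [dotProduct]
    have hAx : (fun _ : Fin n => (1:ℝ)) ⬝ᵥ (A *ᵥ (fun _ : Fin n => (1:ℝ)))
        = ∑ k, (∑ i, P k i)^2 := by
      rw [hAdef, ← hPT, Matrix.conjTranspose_eq_transpose_of_trivial,
        ← Matrix.mulVec_mulVec, dotProduct_mulVec, Matrix.vecMul_transpose]
      simp [dotProduct, Matrix.mulVec, sq]
    have hlb : (n:ℝ) * ((n:ℝ) * c1 * ρ)^2 ≤ ∑ k, (∑ i, P k i)^2 := by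
      have : ∀ k : Fin n, ((n:ℝ) * c1 * ρ)^2 ≤ (∑ i, P k i)^2 := by
        intro k
        have h1 : (n:ℝ) * c1 * ρ ≤ ∑ i, P k i := by
          calc (n:ℝ) * c1 * ρ = ∑ _i : Fin n, c1 * ρ := by
                simp [Finset.sum_const, mul_assoc]
          _ ≤ ∑ i, P k i := Finset.sum_le_sum (fun i _ => (hent k i).1)
        have h2 : 0 ≤ (n:ℝ) * c1 * ρ := by positivity
        nlinarith
      calc (n:ℝ) * ((n:ℝ) * c1 * ρ)^2 = ∑ _k : Fin n, ((n:ℝ) * c1 * ρ)^2 := by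
            simp [Finset.sum_const]
      _ ≤ ∑ k, (∑ i, P k i)^2 := Finset.sum_le_sum (fun k _ => this k)
    calc (n:ℝ) * ((n:ℝ) * c1 * ρ)^2 ≤ ∑ k, (∑ i, P k i)^2 := hlb
    _ = (fun _ : Fin n => (1:ℝ)) ⬝ᵥ (A *ᵥ (fun _ : Fin n => (1:ℝ))) := hAx.symm
    _ ≤ f ⟨0, hn⟩ * (n:ℝ) := by rw [← hxx]; exact hx
  have hf0 : ((n:ℝ) * c1 * ρ)^2 ≤ f ⟨0, hn⟩ := by
    have := hray
    nlinarith
  -- d ≥ 1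
  have hdpos : 0 < d := by
    have hne : f ⟨0, hn⟩ ≠ 0 := by
      have : (0:ℝ) < f ⟨0, hn⟩ := lt_of_lt_of_le (by positivity) hf0
      exact this.ne'
    simpa using (hsupp ⟨0, hn⟩).mp hne
  have hdn : d ≤ n := by
    have h := P.rank_le_card_width
    rw [hrank] at h
    simpa using h
  -- index of the d-th largest eigenvalue
  have hd1n : d - 1 < n := by omega
  set i0 : Fin n := ⟨d - 1, hd1n⟩ with hi0
  have hfi0ne : f i0 ≠ 0 := (hsupp i0).mpr (by simp [hi0]; omega)
  have ht : 0 < f i0 := lt_of_le_of_ne (hennz (σ i0)) (Ne.symm hfi0ne)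
  -- expressions for the singular values
  have hsv : sval P (d - 1) = Real.sqrt (f i0) := by
    rw [sval, dif_pos hd1n]; rfl
  have hSv : sval P 0 = Real.sqrt (f ⟨0, hn⟩) := by
    rw [sval, dif_pos hn]; rfl
  have hsvpos : 0 < sval P (d - 1) := by rw [hsv]; exact Real.sqrt_pos.mpr ht
  have hSle : sval P 0 ≤ c0 * sval P (d - 1) := (div_le_iff₀ hsvpos).mp hcond
  have hSlb : (n:ℝ) * c1 * ρ ≤ sval P 0 := by
    rw [hSv]
    calc (n:ℝ) * c1 * ρ = Real.sqrt (((n:ℝ) * c1 * ρ)^2) := by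
          rw [Real.sqrt_sq (by positivity)]
    _ ≤ Real.sqrt (f ⟨0, hn⟩) := Real.sqrt_le_sqrt hf0
  have hc01 : 1 ≤ c0 := by
    refine le_trans ?_ hcond
    rw [le_div_iff₀ hsvpos, one_mul, hsv, hSv]
    exact Real.sqrt_le_sqrt (hanti (by simp [Fin.le_def]))
  have hc1c2 : c1 ≤ c2 := by
    have h := hent ⟨0, hn⟩ ⟨0, hn⟩
    nlinarith [h.1, h.2]
  -- every lam i ^ 2 is at least f i0
  have hlow : ∀ i : Fin d, f i0 ≤ lam i ^ 2 := by
    intro i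
    set u : Fin n → ℝ := fun r => U r i with hu
    have hueig : P *ᵥ u = lam i • u := hUeig i
    have hu1 : ∑ k, U k i * U k i = 1 := by
      have h := congrFun (congrFun hUorth i) i
      simpa [Matrix.mul_apply, Matrix.transpose_apply, Matrix.one_apply] using h
    have hu_ne : u ≠ 0 := by
      intro h
      have : ∀ k, U k i = 0 := fun k => congrFun h k
      simp [this] at hu1
    have hAu : A *ᵥ u = (lam i ^ 2) • u := by
      rw [hAdef, hPH, ← Matrix.mulVec_mulVec, hueig, Matrix.mulVec_smul, hueig,
        smul_smul, sq]
    obtain ⟨j, hj⟩ := eig_mem_aux (isHermitian_transpose_mul_self_aux P)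
      (lam i ^ 2) u hu_ne hAu
    have hfe : f (σ.symm j) = lam i ^ 2 := by
      rw [hf]; simp only [Equiv.apply_symm_apply]; exact hj
    have hjlt : ((σ.symm j : Fin n) : ℕ) < d := by
      apply (hsupp _).mp
      rw [hfe]
      exact pow_ne_zero _ (hlam i)
    have hle : i0 ≤ σ.symm j ∨ σ.symm j ≤ i0 := le_total _ _
    have : f i0 ≤ f (σ.symm j) := hanti (by rw [Fin.le_def]; simp [hi0]; omega)
    rwa [hfe] at this
  -- right-hand side is nonnegative
  have hRHS0 : 0 ≤ (c0 * (c2 * Real.sqrt c2) / c1) * Real.sqrt ρ := by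
    have hc00 : (0:ℝ) ≤ c0 := le_trans zero_le_one hc01
    exact mul_nonneg (div_nonneg (mul_nonneg hc00
      (mul_nonneg hc2pos.le (Real.sqrt_nonneg _))) hc1.le) (Real.sqrt_nonneg _)
  rw [twoInfNorm]
  apply Real.iSup_le _ hRHS0
  intro i
  -- row square computation
  have hrowsq : ∑ j, ((U * Matrix.diagonal fun i => Real.sqrt |lam i|) i j)^2
      = ∑ j, U i j ^ 2 * |lam j| := by
    apply Finset.sum_congr rfl
    intro j _
    rw [Matrix.mul_diagonal, mul_pow, Real.sq_sqrt (abs_nonneg _)]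
  have hPUentry : ∀ j : Fin d, (P * U) i j = lam j * U i j := by
    intro j
    have h := congrFun (hUeig j) i
    simpa [Matrix.mulVec, Matrix.mul_apply, dotProduct] using h
  have hstep2 : ∑ j, U i j ^ 2 * lam j ^ 2 = ∑ j, ((P * U) i j)^2 := by
    apply Finset.sum_congr rfl
    intro j _
    rw [hPUentry j]; ring
  -- projection bound
  have hQ : (U * Uᵀ) * (U * Uᵀ) = U * Uᵀ := by
    rw [Matrix.mul_assoc U Uᵀ (U * Uᵀ), ← Matrix.mul_assoc Uᵀ U Uᵀ, hUorth, Matrix.one_mul]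
  have hUUherm : (U * Uᵀ).IsHermitian := by
    rw [← Matrix.conjTranspose_eq_transpose_of_trivial]
    exact Matrix.isHermitian_mul_conjTranspose_self U
  have hRherm : ((1 : Matrix (Fin n) (Fin n) ℝ) - U * Uᵀ).IsHermitian :=
    Matrix.isHermitian_one.sub hUUherm
  have hRT : ((1 : Matrix (Fin n) (Fin n) ℝ) - U * Uᵀ)ᵀ = 1 - U * Uᵀ := by
    rw [← Matrix.conjTranspose_eq_transpose_of_trivial]
    exact hRherm
  have hRR : ((1 : Matrix (Fin n) (Fin n) ℝ) - U * Uᵀ) * (1 - U * Uᵀ) = 1 - U * Uᵀ := by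
    rw [Matrix.sub_mul, Matrix.one_mul, Matrix.mul_sub, Matrix.mul_one, hQ]
    abel
  have hRpsd : ((1 : Matrix (Fin n) (Fin n) ℝ) - U * Uᵀ).PosSemidef := by
    refine Matrix.PosSemidef.of_dotProduct_mulVec_nonneg hRherm fun x => ?_
    have h1 : ((1 : Matrix (Fin n) (Fin n) ℝ) - U * Uᵀ) *ᵥ x
        = (1 - U * Uᵀ) *ᵥ ((1 - U * Uᵀ) *ᵥ x) := by
      rw [Matrix.mulVec_mulVec, hRR]
    have h2 : x ᵥ* ((1 : Matrix (Fin n) (Fin n) ℝ) - U * Uᵀ) = (1 - U * Uᵀ) *ᵥ x := by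
      calc x ᵥ* ((1 : Matrix (Fin n) (Fin n) ℝ) - U * Uᵀ)
          = x ᵥ* ((1 : Matrix (Fin n) (Fin n) ℝ) - U * Uᵀ)ᵀ := by rw [hRT]
      _ = (1 - U * Uᵀ) *ᵥ x := Matrix.vecMul_transpose _ _
    have hstar : star x = x := by
      funext k; simp
    rw [hstar, h1, dotProduct_mulVec, h2, dotProduct]
    exact Finset.sum_nonneg fun j _ => mul_self_nonneg _
  have hPRP := hRpsd.conjTranspose_mul_mul_same P
  have hdiag : 0 ≤ (Pᴴ * ((1 : Matrix (Fin n) (Fin n) ℝ) - U * Uᵀ) * P) i i := by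
    have h2 := hPRP.dotProduct_mulVec_nonneg (Pi.single i 1)
    simpa [Matrix.mulVec_single, dotProduct, Pi.single_apply] using h2
  have hexp : (Pᴴ * ((1 : Matrix (Fin n) (Fin n) ℝ) - U * Uᵀ) * P)
      = P * P - P * (U * Uᵀ) * P := by
    rw [hPH, Matrix.mul_sub, Matrix.mul_one, Matrix.sub_mul]
  have hPQP : (P * (U * Uᵀ) * P) i i = ∑ j, ((P * U) i j)^2 := by
    have h1 : P * (U * Uᵀ) * P = (P * U) * ((P * U)ᵀ) := by
      rw [Matrix.transpose_mul, hPT]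
      simp only [Matrix.mul_assoc]
    rw [h1, Matrix.mul_apply]
    apply Finset.sum_congr rfl
    intro j _
    rw [Matrix.transpose_apply, sq]
  have hPP : (P * P) i i = ∑ j, (P i j)^2 := by
    rw [Matrix.mul_apply]
    apply Finset.sum_congr rfl
    intro j _
    rw [hPsymm.apply i j, sq]
  have hstep3 : ∑ j, ((P * U) i j)^2 ≤ ∑ j, (P i j)^2 := by
    rw [hexp] at hdiag
    have := hdiag
    rw [Matrix.sub_apply, hPQP, hPP] at this
    linarith
  have hstep4 : ∑ j, (P i j)^2 ≤ (n:ℝ) * (c2 * ρ)^2 := by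
    calc ∑ j, (P i j)^2 ≤ ∑ _j : Fin n, (c2 * ρ)^2 := by
          apply Finset.sum_le_sum
          intro j _
          have h := hent i j
          nlinarith [h.1, h.2, mul_pos hc1 hρpos]
    _ = (n:ℝ) * (c2 * ρ)^2 := by simp [Finset.sum_const]
  have hterm : ∀ j : Fin d, U i j ^ 2 * |lam j|
      ≤ (U i j ^ 2 * lam j ^ 2) / sval P (d - 1) := by
    intro j
    have hsvle : sval P (d - 1) ≤ |lam j| := by
      rw [hsv]
      calc Real.sqrt (f i0) ≤ Real.sqrt (lam j ^ 2) := Real.sqrt_le_sqrt (hlow j)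
      _ = |lam j| := Real.sqrt_sq_eq_abs _
    have habs : |lam j| ≤ lam j ^ 2 / sval P (d - 1) := by
      rw [le_div_iff₀ hsvpos]
      calc |lam j| * sval P (d - 1) ≤ |lam j| * |lam j| :=
            mul_le_mul_of_nonneg_left hsvle (abs_nonneg _)
      _ = lam j ^ 2 := by rw [abs_mul_abs_self, sq]
    rw [mul_div_assoc]
    exact mul_le_mul_of_nonneg_left habs (sq_nonneg _)
  have hchain : ∑ j, U i j ^ 2 * |lam j| ≤ (n:ℝ) * (c2 * ρ)^2 / sval P (d - 1) := by
    calc ∑ j, U i j ^ 2 * |lam j|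
        ≤ ∑ j, (U i j ^ 2 * lam j ^ 2) / sval P (d - 1) := Finset.sum_le_sum fun j _ => hterm j
    _ = (∑ j, U i j ^ 2 * lam j ^ 2) / sval P (d - 1) := by rw [Finset.sum_div]
    _ = (∑ j, ((P * U) i j)^2) / sval P (d - 1) := by rw [hstep2]
    _ ≤ (∑ j, (P i j)^2) / sval P (d - 1) := by
          exact (div_le_div_iff_of_pos_right hsvpos).mpr hstep3
    _ ≤ (n:ℝ) * (c2 * ρ)^2 / sval P (d - 1) := by
          exact (div_le_div_iff_of_pos_right hsvpos).mpr hstep4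
  have hb2 : (n:ℝ) * (c2 * ρ)^2 / sval P (d - 1) ≤ c0 * c2^2 * ρ / c1 := by
    rw [div_le_div_iff₀ hsvpos hc1]
    have hkey : (n:ℝ) * c1 * ρ ≤ c0 * sval P (d - 1) := le_trans hSlb hSle
    nlinarith [hkey, hρpos, hc2pos, hN, hsvpos]
  have hrowle : ∑ j, ((U * Matrix.diagonal fun i => Real.sqrt |lam i|) i j)^2
      ≤ c0 * c2^2 * ρ / c1 := by
    rw [hrowsq]
    exact le_trans hchain hb2
  have hsq : c0 * c2^2 * ρ / c1 ≤ ((c0 * (c2 * Real.sqrt c2) / c1) * Real.sqrt ρ)^2 := by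
    rw [mul_pow, div_pow, mul_pow, mul_pow, Real.sq_sqrt hc2pos.le, Real.sq_sqrt hρpos.le]
    rw [div_mul_eq_mul_div, div_le_div_iff₀ hc1 (by positivity : (0:ℝ) < c1^2)]
    have hc0pos : (0:ℝ) < c0 := lt_of_lt_of_le zero_lt_one hc01
    have hcc : c1 ≤ c0 * c2 := hc1c2.trans (le_mul_of_one_le_left hc2pos.le hc01)
    nlinarith [mul_le_mul_of_nonneg_right hcc
      (show (0:ℝ) ≤ c0 * c2^2 * ρ * c1 by positivity)]
  calc Real.sqrt (∑ j, ((U * Matrix.diagonal fun i => Real.sqrt |lam i|) i j)^2)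
      ≤ Real.sqrt (((c0 * (c2 * Real.sqrt c2) / c1) * Real.sqrt ρ)^2) :=
        Real.sqrt_le_sqrt (le_trans hrowle hsq)
  _ = (c0 * (c2 * Real.sqrt c2) / c1) * Real.sqrt ρ := Real.sqrt_sq hRHS0


end
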